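/- arXiv:math/0010261 — 3 statements merged into one kernel-verified Lean document; each statement's English description precedes it below -/
import Mathlib

section
/- Let X and Y be Tychonoff (completely regular Hausdorff) spaces and let E and F be nontrivial real normed vector spaces. If there exists a biseparating map T : C*(X,E) → C*(Y,F), then the Stone–Čech compactifications StoneCech X and StoneCech Y are homeomorphic. -/
open scoped BoundedContinuousFunction
open Function Set Topology Filter

set_option linter.unusedSectionVars false
namespace Stmt0Aux

variable {X Y E F : Type*}
  [TopologicalSpace X] [TopologicalSpace Y]
  [NormedAddCommGroup E] [NormedSpace ℝ E]
  [NormedAddCommGroup F] [NormedSpace ℝ F]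

def Spt (U : Set (StoneCech X)) (f : X →ᵇ E) : Prop :=
  ∀ x, stoneCechUnit x ∉ U → f x = 0

/-- Bump function supported in `U` with prescribed value at one point. -/
theorem exists_bump {U : Set (StoneCech X)} (hU : IsOpen U) {x : X}
    (hx : stoneCechUnit x ∈ U) (e : E) :
    ∃ f : X →ᵇ E, Spt U f ∧ f x = e := by
  obtain ⟨φ, hφ0, hφ1, hφ01⟩ :=
    exists_continuous_zero_one_of_isClosed (X := StoneCech X) hU.isClosed_compl
      (isClosed_singleton (x := stoneCechUnit x))
      (by simpa [Set.disjoint_singleton_right] using hx)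
  refine ⟨BoundedContinuousFunction.ofNormedAddCommGroup
      (fun x' => φ (stoneCechUnit x') • e)
      ((φ.continuous.comp continuous_stoneCechUnit).smul continuous_const) ‖e‖
      (fun x' => ?_), fun x' hx' => ?_, ?_⟩
  · rw [norm_smul]
    have h01 := hφ01 (stoneCechUnit x')
    calc ‖φ (stoneCechUnit x')‖ * ‖e‖ ≤ 1 * ‖e‖ := by
          apply mul_le_mul_of_nonneg_right _ (norm_nonneg e)
          rw [Real.norm_eq_abs, abs_le]; exact ⟨by linarith [h01.1], h01.2⟩
      _ = ‖e‖ := one_mul _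
  · simp only [BoundedContinuousFunction.coe_ofNormedAddCommGroup]
    rw [hφ0 hx', Pi.zero_apply, zero_smul]
  · simp only [BoundedContinuousFunction.coe_ofNormedAddCommGroup]
    rw [hφ1 rfl, Pi.one_apply, one_smul]

/-- `p ∈ βX` is a support point for `y` under `T`. -/
def IsSupp (T : (X →ᵇ E) → (Y →ᵇ F)) (y : Y) (p : StoneCech X) : Prop :=
  ∀ U : Set (StoneCech X), IsOpen U → p ∈ U → ∃ f : X →ᵇ E, Spt U f ∧ T f y ≠ 0

section T

variable (T : (X →ᵇ E) → (Y →ᵇ F))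

theorem map_zero (hadd : ∀ f g : X →ᵇ E, T (f + g) = T f + T g) : T 0 = 0 := by
  have := hadd 0 0
  rw [add_zero] at this
  exact left_eq_add.mp this

theorem map_sum (hadd : ∀ f g : X →ᵇ E, T (f + g) = T f + T g)
    {ι : Type*} (s : Finset ι) (f : ι → X →ᵇ E) :
    T (∑ i ∈ s, f i) = ∑ i ∈ s, T (f i) := by
  classical
  induction s using Finset.induction with
  | empty => simpa using map_zero T hadd
  | insert _ _ hi ih =>
      rw [Finset.sum_insert hi, Finset.sum_insert hi, hadd, ih]

theorem exists_isSupp [Nontrivial F]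
    (hadd : ∀ f g : X →ᵇ E, T (f + g) = T f + T g)
    (hsurj : Surjective T) (y : Y) : ∃ p, IsSupp T y p := by
  classical
  by_contra hc
  push_neg at hc
  simp only [IsSupp, not_forall, not_exists] at hc
  choose U hUo hUp hU using fun p =>
    by simpa only [not_and, not_not, exists_prop] using hc p
  obtain ⟨t, ht⟩ := isCompact_univ.elim_finite_subcover U hUo
    (fun p _ => mem_iUnion.2 ⟨p, hUp p⟩)
  have htU : (univ : Set (StoneCech X)) ⊆ ⋃ i : t, U i := by
    intro p hp
    obtain ⟨i, hit, hi⟩ := mem_iUnion₂.1 (ht hp)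
    exact mem_iUnion.2 ⟨⟨i, hit⟩, hi⟩
  obtain ⟨ρ, hρ⟩ := PartitionOfUnity.exists_isSubordinate (X := StoneCech X)
    isClosed_univ (fun i : t => U i) (fun i => hUo i) htU
  obtain ⟨e0, he0⟩ := exists_ne (0 : F)
  obtain ⟨g0, hg0⟩ := hsurj (BoundedContinuousFunction.const Y e0)
  set g : t → X →ᵇ E := fun i =>
    BoundedContinuousFunction.ofNormedAddCommGroup
      (fun x => ρ i (stoneCechUnit x) • g0 x)
      (((ρ i).continuous.comp continuous_stoneCechUnit).smul g0.continuous) ‖g0‖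
      (fun x => by
        rw [norm_smul]
        calc ‖ρ i (stoneCechUnit x)‖ * ‖g0 x‖ ≤ 1 * ‖g0‖ := by
              apply mul_le_mul _ (g0.norm_coe_le_norm x) (norm_nonneg _) zero_le_one
              rw [Real.norm_eq_abs, abs_le]
              exact ⟨by linarith [ρ.nonneg i (stoneCechUnit x)], ρ.le_one i _⟩
          _ = ‖g0‖ := one_mul _) with hg
  have hsum : ∑ i : t, g i = g0 := by
    ext x
    rw [BoundedContinuousFunction.coe_sum, Finset.sum_apply]
    simp only [hg, BoundedContinuousFunction.coe_ofNormedAddCommGroup]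
    rw [← Finset.sum_smul]
    have : ∑ i : t, ρ i (stoneCechUnit x) = 1 := by
      rw [← finsum_eq_sum_of_fintype]
      exact ρ.sum_eq_one (mem_univ _)
    rw [this, one_smul]
  have hTg0 : T g0 y = 0 := by
    rw [← hsum, map_sum T hadd]
    rw [BoundedContinuousFunction.coe_sum, Finset.sum_apply]
    apply Finset.sum_eq_zero
    intro i _
    apply hU i
    intro x hx
    simp only [hg, BoundedContinuousFunction.coe_ofNormedAddCommGroup]
    rw [image_eq_zero_of_notMem_tsupport (fun hmem => hx (hρ i hmem)), zero_smul]
  rw [hg0] at hTg0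
  exact he0 hTg0

theorem isSupp_unique
    (hsep : ∀ f g : X →ᵇ E, (∀ x, ‖f x‖ * ‖g x‖ = 0) → ∀ y, ‖T f y‖ * ‖T g y‖ = 0)
    {y : Y} {p q : StoneCech X} (hp : IsSupp T y p) (hq : IsSupp T y q) : p = q := by
  by_contra hne
  obtain ⟨U, V, hUo, hVo, hpU, hqV, hUV⟩ := t2_separation hne
  obtain ⟨f, hfU, hfy⟩ := hp U hUo hpU
  obtain ⟨g, hgV, hgy⟩ := hq V hVo hqV
  have : ∀ x, ‖f x‖ * ‖g x‖ = 0 := by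
    intro x
    rcases eq_or_ne (f x) 0 with h | h
    · rw [h, norm_zero, zero_mul]
    · have hxU : stoneCechUnit x ∈ U := by
        by_contra hxU; exact h (hfU x hxU)
      have : g x = 0 := hgV x (fun hxV => (Set.disjoint_left.1 hUV hxU) hxV)
      rw [this, norm_zero, mul_zero]
  have := hsep f g this y
  rcases mul_eq_zero.1 this with h | h
  · exact hfy (norm_eq_zero.1 h)
  · exact hgy (norm_eq_zero.1 h)

theorem isSupp_mem_closure
    (hsep : ∀ f g : X →ᵇ E, (∀ x, ‖f x‖ * ‖g x‖ = 0) → ∀ y, ‖T f y‖ * ‖T g y‖ = 0)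
    {y : Y} {p : StoneCech X} (hp : IsSupp T y p) {f : X →ᵇ E} (hf : T f y ≠ 0) :
    p ∈ closure (stoneCechUnit '' {x | f x ≠ 0}) := by
  by_contra hcl
  obtain ⟨g, hgU, hgy⟩ := hp _ isClosed_closure.isOpen_compl hcl
  have : ∀ x, ‖f x‖ * ‖g x‖ = 0 := by
    intro x
    rcases eq_or_ne (f x) 0 with h | h
    · rw [h, norm_zero, zero_mul]
    · have : g x = 0 := hgU x (by
        simp only [mem_compl_iff, not_not]
        exact subset_closure (mem_image_of_mem _ h))
      rw [this, norm_zero, mul_zero]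
  have := hsep f g this y
  rcases mul_eq_zero.1 this with h | h
  · exact hf (norm_eq_zero.1 h)
  · exact hgy (norm_eq_zero.1 h)

end T

end Stmt0Aux

namespace Stmt0Aux

variable {X Y E F : Type*}
  [TopologicalSpace X] [TopologicalSpace Y]
  [NormedAddCommGroup E] [NormedSpace ℝ E]
  [NormedAddCommGroup F] [NormedSpace ℝ F]

variable (T : (X →ᵇ E) → (Y →ᵇ F))

noncomputable def suppMap [Nontrivial F]
    (hadd : ∀ f g : X →ᵇ E, T (f + g) = T f + T g)
    (hsurj : Surjective T) : Y → StoneCech X :=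
  fun y => (exists_isSupp T hadd hsurj y).choose

theorem suppMap_isSupp [Nontrivial F]
    (hadd : ∀ f g : X →ᵇ E, T (f + g) = T f + T g)
    (hsurj : Surjective T) (y : Y) : IsSupp T y (suppMap T hadd hsurj y) :=
  (exists_isSupp T hadd hsurj y).choose_spec

theorem continuous_suppMap [Nontrivial F]
    (hadd : ∀ f g : X →ᵇ E, T (f + g) = T f + T g)
    (hsurj : Surjective T)
    (hsep : ∀ f g : X →ᵇ E, (∀ x, ‖f x‖ * ‖g x‖ = 0) → ∀ y, ‖T f y‖ * ‖T g y‖ = 0) :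
    Continuous (suppMap T hadd hsurj) := by
  rw [continuous_iff_continuousAt]
  intro y0
  rw [ContinuousAt, tendsto_def]
  intro U hU
  obtain ⟨s, hs_nhds, hs_closed, hsU⟩ := exists_mem_nhds_isClosed_subset hU
  have hmem : suppMap T hadd hsurj y0 ∈ interior s := mem_interior_iff_mem_nhds.2 hs_nhds
  obtain ⟨f, hfspt, hfy0⟩ := suppMap_isSupp T hadd hsurj y0 (interior s) isOpen_interior hmem
  refine mem_of_superset (IsOpen.mem_nhds ?_ (show y0 ∈ {y | T f y ≠ 0} from hfy0)) ?_
  · have : {y | T f y ≠ 0} = (T f) ⁻¹' ({0}ᶜ) := by ext y; simp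
    rw [this]
    exact (isOpen_compl_singleton).preimage (T f).continuous
  · intro y hy
    have h1 : suppMap T hadd hsurj y ∈ closure (stoneCechUnit '' {x | f x ≠ 0}) :=
      isSupp_mem_closure T hsep (suppMap_isSupp T hadd hsurj y) hy
    have h2 : stoneCechUnit '' {x | f x ≠ 0} ⊆ interior s := by
      rintro _ ⟨x, hx, rfl⟩
      by_contra hmem'
      exact hx (hfspt x hmem')
    have : closure (stoneCechUnit '' {x | f x ≠ 0}) ⊆ s :=
      closure_minimal (h2.trans interior_subset) hs_closed
    exact hsU (this h1)

end Stmt0Aux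

namespace Stmt0Aux

variable {X Y E F : Type*}
  [TopologicalSpace X] [TopologicalSpace Y]
  [NormedAddCommGroup E] [NormedSpace ℝ E]
  [NormedAddCommGroup F] [NormedSpace ℝ F]

theorem key [Nontrivial E] [Nontrivial F]
    (T : (X →ᵇ E) → (Y →ᵇ F)) (S : (Y →ᵇ F) → (X →ᵇ E))
    (haddT : ∀ f g : X →ᵇ E, T (f + g) = T f + T g)
    (hsurjT : Surjective T)
    (hsepT : ∀ f g : X →ᵇ E, (∀ x, ‖f x‖ * ‖g x‖ = 0) → ∀ y, ‖T f y‖ * ‖T g y‖ = 0)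
    (haddS : ∀ f g : Y →ᵇ F, S (f + g) = S f + S g)
    (hsurjS : Surjective S)
    (hsepS : ∀ f g : Y →ᵇ F, (∀ y, ‖f y‖ * ‖g y‖ = 0) → ∀ x, ‖S f x‖ * ‖S g x‖ = 0)
    (hST : ∀ g, T (S g) = g) (y : Y) :
    stoneCechExtend (continuous_suppMap S haddS hsurjS hsepS)
      (suppMap T haddT hsurjT y) = stoneCechUnit y := by
  set k := suppMap S haddS hsurjS with hk
  set K := stoneCechExtend (continuous_suppMap S haddS hsurjS hsepS) with hK
  set p := suppMap T haddT hsurjT y with hp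
  by_contra hne
  obtain ⟨W1, W2, hW1o, hW2o, hqW1, hyW2, hW12⟩ := t2_separation hne
  -- shrink W2
  obtain ⟨s, hs_nhds, hs_closed, hsW2⟩ :=
    exists_mem_nhds_isClosed_subset (hW2o.mem_nhds hyW2)
  have hyW2' : stoneCechUnit y ∈ interior s := mem_interior_iff_mem_nhds.2 hs_nhds
  -- V = K⁻¹ W1 is an open neighborhood of p
  have hVo : IsOpen (K ⁻¹' W1) :=
    hW1o.preimage (continuous_stoneCechExtend _)
  obtain ⟨f, hfspt, hfy⟩ := suppMap_isSupp T haddT hsurjT y (K ⁻¹' W1) hVo hqW1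
  -- bump g on Y supported in interior s with g y = e0
  obtain ⟨e0, he0⟩ := exists_ne (0 : F)
  obtain ⟨g, hgspt, hgy⟩ := exists_bump isOpen_interior hyW2' e0
  -- f and S g have disjoint cozero sets
  have hdisj : ∀ x, ‖f x‖ * ‖(S g) x‖ = 0 := by
    intro x
    rcases eq_or_ne (f x) 0 with h | h
    · rw [h, norm_zero, zero_mul]
    · have hxV : stoneCechUnit x ∈ K ⁻¹' W1 := by
        by_contra hxV; exact h (hfspt x hxV)
      have hkx1 : k x ∈ W1 := by
        have := congrFun (stoneCechExtend_extends
          (continuous_suppMap S haddS hsurjS hsepS)) x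
        rw [← hK] at this
        rw [Function.comp_apply] at this
        rw [← hk] at this
        rw [← this]
        exact hxV
      rcases eq_or_ne ((S g) x) 0 with h' | h'
      · rw [h', norm_zero, mul_zero]
      · exfalso
        have hkx2 : k x ∈ closure (stoneCechUnit '' {y' | g y' ≠ 0}) :=
          isSupp_mem_closure S hsepS (suppMap_isSupp S haddS hsurjS x) h'
        have hsub : stoneCechUnit '' {y' | g y' ≠ 0} ⊆ interior s := by
          rintro _ ⟨y', hy', rfl⟩
          by_contra hmem
          exact hy' (hgspt y' hmem)
        have : k x ∈ W2 :=
          hsW2 (closure_minimal (hsub.trans interior_subset) hs_closed hkx2)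
        exact Set.disjoint_left.1 hW12 hkx1 this
  have := hsepT f (S g) hdisj y
  rw [hST g] at this
  rcases mul_eq_zero.1 this with h | h
  · exact hfy (norm_eq_zero.1 h)
  · rw [hgy] at h; exact he0 (norm_eq_zero.1 h)

end Stmt0Aux

open Stmt0Aux in
/-- If `X`, `Y` are Tychonoff spaces, `E`, `F` nontrivial real normed spaces,
and there exists a biseparating map `T : C*(X,E) → C*(Y,F)`, then `StoneCech X` and
`StoneCech Y` are homeomorphic. -/
theorem stmt_0 {X Y E F : Type*}
    [TopologicalSpace X] [T35Space X] [TopologicalSpace Y] [T35Space Y]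
    [NormedAddCommGroup E] [NormedSpace ℝ E] [Nontrivial E]
    [NormedAddCommGroup F] [NormedSpace ℝ F] [Nontrivial F]
    (T : (X →ᵇ E) → (Y →ᵇ F))
    (hbij : Function.Bijective T)
    (hadd : ∀ f g : X →ᵇ E, T (f + g) = T f + T g)
    (hsep : ∀ f g : X →ᵇ E, (∀ x, ‖f x‖ * ‖g x‖ = 0) → ∀ y, ‖T f y‖ * ‖T g y‖ = 0)
    (hsep' : ∀ f g : X →ᵇ E, (∀ y, ‖T f y‖ * ‖T g y‖ = 0) → ∀ x, ‖f x‖ * ‖g x‖ = 0) :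
    Nonempty (StoneCech X ≃ₜ StoneCech Y) := by
  classical
  set S : (Y →ᵇ F) → (X →ᵇ E) := fun g => (Equiv.ofBijective T hbij).symm g with hSdef
  have hTS : ∀ f, S (T f) = f := fun f => (Equiv.ofBijective T hbij).symm_apply_apply f
  have hST : ∀ g, T (S g) = g := fun g => (Equiv.ofBijective T hbij).apply_symm_apply g
  have hsurjT : Function.Surjective T := hbij.2
  have haddS : ∀ u v : Y →ᵇ F, S (u + v) = S u + S v := by
    intro u v
    apply hbij.1
    rw [hST, hadd, hST, hST]
  have hsurjS : Function.Surjective S := fun f => ⟨T f, hTS f⟩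
  have hsepS : ∀ u v : Y →ᵇ F, (∀ y, ‖u y‖ * ‖v y‖ = 0) → ∀ x, ‖S u x‖ * ‖S v x‖ = 0 := by
    intro u v h
    apply hsep' (S u) (S v)
    intro y
    rw [hST, hST]
    exact h y
  set H : StoneCech Y → StoneCech X :=
    stoneCechExtend (continuous_suppMap T hadd hsurjT hsep) with hH
  set K : StoneCech X → StoneCech Y :=
    stoneCechExtend (continuous_suppMap S haddS hsurjS hsepS) with hK
  have hKH : K ∘ H = id := by
    apply stoneCech_hom_ext
      ((continuous_stoneCechExtend _).comp (continuous_stoneCechExtend _)) continuous_id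
    funext y
    have h1 : H (stoneCechUnit y) = suppMap T hadd hsurjT y :=
      congrFun (stoneCechExtend_extends (continuous_suppMap T hadd hsurjT hsep)) y
    show K (H (stoneCechUnit y)) = stoneCechUnit y
    rw [h1]
    exact key T S hadd hsurjT hsep haddS hsurjS hsepS hST y
  have hHK : H ∘ K = id := by
    apply stoneCech_hom_ext
      ((continuous_stoneCechExtend _).comp (continuous_stoneCechExtend _)) continuous_id
    funext x
    have h1 : K (stoneCechUnit x) = suppMap S haddS hsurjS x :=
      congrFun (stoneCechExtend_extends (continuous_suppMap S haddS hsurjS hsepS)) x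
    show H (K (stoneCechUnit x)) = stoneCechUnit x
    rw [h1]
    exact key S T haddS hsurjS hsepS hadd hsurjT hsep hTS x
  exact ⟨{ toEquiv := Equiv.mk K H (fun p => congrFun hHK p) (fun q => congrFun hKH q),
           continuous_toFun := continuous_stoneCechExtend _,
           continuous_invFun := continuous_stoneCechExtend _ }⟩
end

section
/- Let X and Y be Tychonoff (completely regular Hausdorff) spaces and let E and F be nontrivial real normed vector spaces. If there exists a biseparating map T : C(X,E) → C(Y,F), then the Stone–Čech compactifications StoneCech X and StoneCech Y are homeomorphic. -/
open Set Function

section Aux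

variable {X Y E F : Type*} [TopologicalSpace X] [TopologicalSpace Y]
  [NormedAddCommGroup E] [NormedSpace ℝ E]
  [NormedAddCommGroup F] [NormedSpace ℝ F] [Nontrivial F]

/-- A separating additive surjection `T : C(X,E) → C(Y,F)` induces a continuous "support map"
`δ : Y → StoneCech X` such that whenever `T f y ≠ 0`, the point `δ y` lies in the closure of the
cozero set of `f` (viewed in `StoneCech X`). -/
theorem biseparating_support_map
    (T : C(X, E) → C(Y, F)) (hsurj : Function.Surjective T)
    (hadd : ∀ f g : C(X, E), T (f + g) = T f + T g)
    (hsep : ∀ f g : C(X, E), (∀ x, ‖f x‖ * ‖g x‖ = 0) → ∀ y, ‖T f y‖ * ‖T g y‖ = 0) :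
    ∃ δ : Y → StoneCech X, Continuous δ ∧
      ∀ (y : Y) (f : C(X, E)), T f y ≠ 0 →
        δ y ∈ closure (stoneCechUnit '' {x | f x ≠ 0}) := by
  classical
  -- separating, reformulated
  have hsep' : ∀ f g : C(X, E), (∀ x, f x = 0 ∨ g x = 0) →
      ∀ y, T f y = 0 ∨ T g y = 0 := by
    intro f g h y
    have := hsep f g (fun x => by rcases h x with h | h <;> simp [h]) y
    rcases mul_eq_zero.1 this with h | h
    · exact Or.inl (norm_eq_zero.1 h)
    · exact Or.inr (norm_eq_zero.1 h)
  -- existence of a support point for each y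
  have hex : ∀ y : Y, ∃ x : StoneCech X, ∀ U : Set (StoneCech X), IsOpen U → x ∈ U →
      ∃ f : C(X, E), (∀ z, f z ≠ 0 → stoneCechUnit z ∈ U) ∧ T f y ≠ 0 := by
    intro y
    by_contra hcon
    push_neg at hcon
    choose U hUo hmemU hkill using hcon
    -- a finite subcover of `StoneCech X`
    obtain ⟨t, ht⟩ := isCompact_univ.elim_finite_subcover U hUo
      (fun x _ => mem_iUnion.2 ⟨x, hmemU x⟩)
    -- a partition of unity subordinate to it
    have htU : (univ : Set (StoneCech X)) ⊆ ⋃ i : t, U i := by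
      intro x _
      obtain ⟨i, hi, hxi⟩ := Set.mem_iUnion₂.1 (ht (mem_univ x))
      exact Set.mem_iUnion.2 ⟨⟨i, hi⟩, hxi⟩
    obtain ⟨ρ, hρ⟩ := PartitionOfUnity.exists_isSubordinate (ι := t) isClosed_univ
      (fun i => U i) (fun i => hUo i) htU
    -- every f satisfies T f y = 0, contradicting surjectivity
    have hall : ∀ f : C(X, E), T f y = 0 := by
      intro f
      set g : t → C(X, E) := fun i =>
        ⟨fun x => ρ i (stoneCechUnit x) • f x,
          (((ρ i).continuous.comp continuous_stoneCechUnit).smul f.continuous)⟩ with hg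
      have hsum : ∑ i : t, g i = f := by
        ext x
        have h1 : ∑ᶠ i : t, ρ i (stoneCechUnit x) = 1 := ρ.sum_eq_one (mem_univ _)
        rw [finsum_eq_sum_of_fintype] at h1
        calc (∑ i : t, g i) x = ∑ i : t, (ρ i (stoneCechUnit x) • f x) := by
              simp [hg]
          _ = (∑ i : t, ρ i (stoneCechUnit x)) • f x := by rw [Finset.sum_smul]
          _ = f x := by rw [h1, one_smul]
      have hzero : ∀ i : t, T (g i) y = 0 := by
        intro i
        refine hkill i (g i) ?_
        intro z hz
        have : ρ i (stoneCechUnit z) ≠ 0 := by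
          intro h0
          apply hz
          simp [hg, h0]
        exact hρ i (subset_closure this)
      let A : C(X, E) →+ C(Y, F) := AddMonoidHom.mk' T hadd
      have : T f = ∑ i : t, T (g i) := by
        rw [← hsum]
        exact map_sum A g Finset.univ
      rw [this]
      simp [ContinuousMap.sum_apply, hzero]
    obtain ⟨e, he⟩ := exists_ne (0 : F)
    obtain ⟨f, hf⟩ := hsurj (ContinuousMap.const Y e)
    have := hall f
    rw [hf] at this
    exact he (by simpa using this)
  -- choose the support point
  choose δ hδ using hex
  -- key closure property
  have hmem : ∀ (y : Y) (f : C(X, E)), T f y ≠ 0 →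
      δ y ∈ closure (stoneCechUnit '' {x | f x ≠ 0}) := by
    intro y f hfy
    by_contra hout
    obtain ⟨g, hg, hgy⟩ := hδ y (closure (stoneCechUnit '' {x | f x ≠ 0}))ᶜ
      isClosed_closure.isOpen_compl hout
    have hdisj : ∀ x, g x = 0 ∨ f x = 0 := by
      intro x
      by_contra hb
      push_neg at hb
      exact (hg x hb.1) (subset_closure ⟨x, hb.2, rfl⟩)
    rcases hsep' g f hdisj y with h | h
    exacts [hgy h, hfy h]
  refine ⟨δ, ?_, hmem⟩
  -- continuity of the support map
  rw [continuous_iff_continuousAt]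
  intro y₀
  rw [ContinuousAt, (closed_nhds_basis (δ y₀)).tendsto_right_iff]
  rintro s ⟨hs, hscl⟩
  obtain ⟨f, hf, hfy⟩ := hδ y₀ (interior s) isOpen_interior (mem_interior_iff_mem_nhds.2 hs)
  have hW : IsOpen {y | T f y ≠ 0} :=
    isOpen_compl_singleton.preimage (T f).continuous
  refine Filter.eventually_of_mem (hW.mem_nhds hfy) ?_
  intro y hy
  have h1 := hmem y f hy
  have h2 : closure (stoneCechUnit '' {x | f x ≠ 0}) ⊆ s := by
    refine (closure_mono ?_).trans ((closure_minimal interior_subset hscl))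
    rintro _ ⟨x, hx, rfl⟩
    exact hf x hx
  exact h2 h1

/-- The extension of one support map undoes the other support map. -/
theorem biseparating_support_ext
    (T : C(X, E) → C(Y, F)) (hsurj : Function.Surjective T)
    (δ : Y → StoneCech X) (hδc : Continuous δ)
    (δ' : X → StoneCech Y) (hδ'c : Continuous δ')
    (hδ : ∀ (y : Y) (f : C(X, E)), T f y ≠ 0 →
      δ y ∈ closure (stoneCechUnit '' {x | f x ≠ 0}))
    (hδ' : ∀ (x : X) (f : C(X, E)), f x ≠ 0 →
      δ' x ∈ closure (stoneCechUnit '' {y | T f y ≠ 0}))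
    (y : Y) : stoneCechExtend hδ'c (δ y) = stoneCechUnit y := by
  set σ := stoneCechExtend hδ'c with hσ
  have key : ∀ u : C(Y, F), u y ≠ 0 →
      σ (δ y) ∈ closure (stoneCechUnit '' {w | u w ≠ 0}) := by
    intro u hu
    obtain ⟨f, rfl⟩ := hsurj u
    have h1 : δ y ∈ closure (stoneCechUnit '' {x | f x ≠ 0}) := hδ y f hu
    have h2 : σ (δ y) ∈ closure (σ '' (stoneCechUnit '' {x | f x ≠ 0})) :=
      (image_closure_subset_closure_image (continuous_stoneCechExtend hδ'c))
        (mem_image_of_mem σ h1)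
    have h3 : σ '' (stoneCechUnit '' {x | f x ≠ 0}) = δ' '' {x | f x ≠ 0} := by
      rw [← image_comp, hσ, stoneCechExtend_extends hδ'c]
    rw [h3] at h2
    have h4 : δ' '' {x | f x ≠ 0} ⊆ closure (stoneCechUnit '' {w | T f w ≠ 0}) := by
      rintro _ ⟨x, hx, rfl⟩
      exact hδ' x f hx
    exact (closure_minimal h4 isClosed_closure) h2
  by_contra hne
  obtain ⟨Uz, V, hUo, hVo, hzU, hyV, hdisj⟩ := t2_separation hne
  obtain ⟨φ, hφ0, hφ1, -⟩ := exists_continuous_zero_one_of_isClosed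
    (isClosed_compl_iff.2 hVo) (isClosed_singleton (x := stoneCechUnit y))
    (disjoint_left.2 fun a ha hb => ha (by rw [Set.mem_singleton_iff.1 hb]; exact hyV))
  obtain ⟨e, he⟩ := exists_ne (0 : F)
  set u : C(Y, F) := ⟨fun w => φ (stoneCechUnit w) • e,
    ((φ.continuous.comp continuous_stoneCechUnit).smul continuous_const)⟩ with hu
  have huy : u y ≠ 0 := by
    have h1 : φ (stoneCechUnit y) = 1 := hφ1 rfl
    simp [hu, h1, he]
  have hcoz : stoneCechUnit '' {w | u w ≠ 0} ⊆ V := by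
    rintro _ ⟨w, hw, rfl⟩
    by_contra hVc
    apply hw
    have : φ (stoneCechUnit w) = 0 := hφ0 hVc
    simp [hu, this]
  have hclos : closure (stoneCechUnit '' {w | u w ≠ 0}) ⊆ Uzᶜ := by
    refine closure_minimal (hcoz.trans ?_) hUo.isClosed_compl
    exact (disjoint_right.1 hdisj)
  exact (hclos (key u huy)) hzU

end Aux

/-- If `X`, `Y` are Tychonoff spaces, `E`, `F` nontrivial real normed spaces,
and there exists a biseparating map `T : C(X,E) → C(Y,F)`, then `StoneCech X` and
`StoneCech Y` are homeomorphic. -/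
theorem stmt_1 {X Y E F : Type*}
    [TopologicalSpace X] [T35Space X] [TopologicalSpace Y] [T35Space Y]
    [NormedAddCommGroup E] [NormedSpace ℝ E] [Nontrivial E]
    [NormedAddCommGroup F] [NormedSpace ℝ F] [Nontrivial F]
    (T : C(X, E) → C(Y, F))
    (hbij : Function.Bijective T)
    (hadd : ∀ f g : C(X, E), T (f + g) = T f + T g)
    (hsep : ∀ f g : C(X, E), (∀ x, ‖f x‖ * ‖g x‖ = 0) → ∀ y, ‖T f y‖ * ‖T g y‖ = 0)
    (hsep' : ∀ f g : C(X, E), (∀ y, ‖T f y‖ * ‖T g y‖ = 0) → ∀ x, ‖f x‖ * ‖g x‖ = 0) :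
    Nonempty (StoneCech X ≃ₜ StoneCech Y) := by
  classical
  set S : C(Y, F) → C(X, E) := fun u => (Equiv.ofBijective T hbij).symm u with hS
  have hTS : ∀ u, T (S u) = u := fun u => (Equiv.ofBijective T hbij).apply_symm_apply u
  have hST : ∀ f, S (T f) = f := fun f => (Equiv.ofBijective T hbij).symm_apply_apply f
  have hSsurj : Function.Surjective S := fun f => ⟨T f, hST f⟩
  have hSadd : ∀ u v : C(Y, F), S (u + v) = S u + S v := by
    intro u v
    apply hbij.1
    rw [hTS, hadd, hTS, hTS]
  have hSsep : ∀ u v : C(Y, F), (∀ y, ‖u y‖ * ‖v y‖ = 0) → ∀ x, ‖S u x‖ * ‖S v x‖ = 0 := by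
    intro u v h x
    refine hsep' (S u) (S v) ?_ x
    rw [hTS, hTS]
    exact h
  obtain ⟨δ, hδc, hδ⟩ := biseparating_support_map T hbij.2 hadd hsep
  obtain ⟨δ', hδ'c, hδ'⟩ := biseparating_support_map S hSsurj hSadd hSsep
  have hδ'T : ∀ (x : X) (f : C(X, E)), f x ≠ 0 →
      δ' x ∈ closure (stoneCechUnit '' {y | T f y ≠ 0}) := by
    intro x f hx
    exact hδ' x (T f) (by rw [hST]; exact hx)
  have hδS : ∀ (y : Y) (u : C(Y, F)), u y ≠ 0 →
      δ y ∈ closure (stoneCechUnit '' {x | S u x ≠ 0}) := by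
    intro y u hy
    exact hδ y (S u) (by rw [hTS]; exact hy)
  have h1 : ∀ y : Y, stoneCechExtend hδ'c (δ y) = stoneCechUnit y :=
    biseparating_support_ext T hbij.2 δ hδc δ' hδ'c hδ hδ'T
  have h2 : ∀ x : X, stoneCechExtend hδc (δ' x) = stoneCechUnit x :=
    biseparating_support_ext S hSsurj δ' hδ'c δ hδc hδ' hδS
  have hBA : stoneCechExtend hδc ∘ stoneCechExtend hδ'c = id := by
    apply Continuous.ext_on denseRange_stoneCechUnit
      ((continuous_stoneCechExtend hδc).comp (continuous_stoneCechExtend hδ'c))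
      continuous_id
    rintro _ ⟨x, rfl⟩
    have hb : stoneCechExtend hδ'c (stoneCechUnit x) = δ' x :=
      congrFun (stoneCechExtend_extends hδ'c) x
    simp only [Function.comp_apply, id_eq, hb]
    exact h2 x
  have hAB : stoneCechExtend hδ'c ∘ stoneCechExtend hδc = id := by
    apply Continuous.ext_on denseRange_stoneCechUnit
      ((continuous_stoneCechExtend hδ'c).comp (continuous_stoneCechExtend hδc))
      continuous_id
    rintro _ ⟨y, rfl⟩
    have hb : stoneCechExtend hδc (stoneCechUnit y) = δ y :=
      congrFun (stoneCechExtend_extends hδc) y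
    simp only [Function.comp_apply, id_eq, hb]
    exact h1 y
  exact ⟨⟨⟨stoneCechExtend hδ'c, stoneCechExtend hδc,
    fun p => congrFun hBA p, fun p => congrFun hAB p⟩,
    continuous_stoneCechExtend hδ'c, continuous_stoneCechExtend hδc⟩⟩
end

section
/- Let X and Y be first-countable Tychonoff (completely regular Hausdorff) spaces and let E and F be nontrivial real normed vector spaces. If there exists a biseparating map T : C*(X,E) → C*(Y,F), then X and Y are homeomorphic. -/
open scoped BoundedContinuousFunction
open Set Filter Topology

noncomputable section

set_option linter.unusedSectionVars false

namespace Stmt2Aux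

/-! ### Stone–Čech basics -/

variable {X : Type*} [TopologicalSpace X]

/-- Extension of a `[0,1]`-valued continuous function to the Stone–Čech compactification,
as a `unitInterval`-valued map. -/
def bextAux {u : X → ℝ} (hc : Continuous u) (h01 : ∀ x, u x ∈ Icc (0:ℝ) 1) :
    StoneCech X → unitInterval :=
  stoneCechExtend (hc.subtype_mk h01)

/-- Extension of a `[0,1]`-valued continuous function to the Stone–Čech compactification. -/
def bext {u : X → ℝ} (hc : Continuous u) (h01 : ∀ x, u x ∈ Icc (0:ℝ) 1) :
    StoneCech X → ℝ :=
  fun z => (bextAux hc h01 z : ℝ)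

lemma bext_continuous {u : X → ℝ} (hc : Continuous u) (h01 : ∀ x, u x ∈ Icc (0:ℝ) 1) :
    Continuous (bext hc h01) :=
  continuous_subtype_val.comp (continuous_stoneCechExtend _)

lemma bext_unit {u : X → ℝ} (hc : Continuous u) (h01 : ∀ x, u x ∈ Icc (0:ℝ) 1) (x : X) :
    bext hc h01 (stoneCechUnit x) = u x := by
  have h := congrFun (stoneCechExtend_extends (hc.subtype_mk h01)) x
  simpa [bext, bextAux, Subtype.ext_iff] using congrArg Subtype.val h

lemma bext_mem {u : X → ℝ} (hc : Continuous u) (h01 : ∀ x, u x ∈ Icc (0:ℝ) 1) (z : StoneCech X) :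
    bext hc h01 z ∈ Icc (0:ℝ) 1 :=
  (bextAux hc h01 z).2

theorem isEmbedding_stoneCechUnit [T35Space X] :
    Topology.IsEmbedding (stoneCechUnit : X → StoneCech X) := by
  refine ⟨isInducing_iff_nhds.2 fun x => le_antisymm
    (continuous_stoneCechUnit.continuousAt (x := x)).le_comap ?_,
    injective_stoneCechUnit_of_t35Space⟩
  rw [le_nhds_iff]
  intro s hxs hs
  obtain ⟨u, hu, hux, huK⟩ :=
    CompletelyRegularSpace.completely_regular x sᶜ hs.isClosed_compl (by simpa using hxs)
  have hc : Continuous fun x' => (u x' : ℝ) := continuous_subtype_val.comp hu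
  have h01 : ∀ x', (u x' : ℝ) ∈ Icc (0:ℝ) 1 := fun x' => (u x').2
  refine mem_comap.2 ⟨{z | bext hc h01 z < 1/2}, ?_, ?_⟩
  · refine IsOpen.mem_nhds (isOpen_lt (bext_continuous hc h01) continuous_const) ?_
    simp only [mem_setOf_eq, bext_unit]
    rw [hux]
    norm_num
  · intro x' hx'
    simp only [mem_preimage, mem_setOf_eq, bext_unit] at hx'
    by_contra hxs'
    have : u x' = 1 := huK hxs'
    rw [this] at hx'
    norm_num at hx'

/-! ### multiplication of a bounded continuous function by a `[0,1]`-valued scalar function -/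

variable {E : Type*} [NormedAddCommGroup E] [NormedSpace ℝ E]

/-- Multiply a bounded continuous function by a `[0,1]`-valued continuous scalar function. -/
def cmul (w : X → ℝ) (hw : Continuous w) (h0 : ∀ x, 0 ≤ w x) (h1 : ∀ x, w x ≤ 1)
    (f : X →ᵇ E) : X →ᵇ E :=
  BoundedContinuousFunction.ofNormedAddCommGroup (fun x => w x • f x)
    (hw.smul f.continuous) ‖f‖ (fun x => by
      rw [norm_smul, Real.norm_eq_abs, abs_of_nonneg (h0 x)]
      calc w x * ‖f x‖ ≤ 1 * ‖f‖ :=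
            mul_le_mul (h1 x) (f.norm_coe_le_norm x) (norm_nonneg _) zero_le_one
        _ = ‖f‖ := one_mul _)

@[simp] lemma cmul_apply (w : X → ℝ) (hw : Continuous w) (h0 : ∀ x, 0 ≤ w x)
    (h1 : ∀ x, w x ≤ 1) (f : X →ᵇ E) (x : X) :
    cmul w hw h0 h1 f x = w x • f x := rfl

lemma cmul_compl_add (w : X → ℝ) (hw : Continuous w) (h0 : ∀ x, 0 ≤ w x) (h1 : ∀ x, w x ≤ 1)
    (f : X →ᵇ E) :
    cmul (fun x => 1 - w x) (continuous_const.sub hw) (fun x => by simp; linarith [h1 x])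
      (fun x => by simp; linarith [h0 x]) f + cmul w hw h0 h1 f = f := by
  ext x
  simp only [BoundedContinuousFunction.coe_add, Pi.add_apply, cmul_apply]
  rw [← add_smul]
  simp


/-! ### Nested bases at Gδ points of compact Hausdorff spaces -/

variable {Z : Type*} [TopologicalSpace Z] [CompactSpace Z] [T2Space Z]

theorem exists_nested_base {z : Z} (U : ℕ → Set Z) (hUo : ∀ n, IsOpen (U n))
    (hUz : ∀ n, z ∈ U n) (hU : ⋂ n, U n = {z}) :
    ∃ O : ℕ → Set Z, (∀ n, IsOpen (O n)) ∧ (∀ n, z ∈ O n) ∧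
      (∀ n, closure (O (n + 1)) ⊆ O n) ∧ (∀ n, O n ⊆ U n) ∧
      ∀ N : Set Z, z ∈ N → IsOpen N → ∃ n, O n ⊆ N := by
  have step : ∀ (W : Set Z), IsOpen W → z ∈ W → ∀ n : ℕ,
      ∃ V : Set Z, (IsOpen V ∧ z ∈ V) ∧ closure V ⊆ W ∩ U n := by
    intro W hWo hWz n
    have hmem : W ∩ U n ∈ 𝓝 z := (hWo.inter (hUo n)).mem_nhds ⟨hWz, hUz n⟩
    obtain ⟨t, htm, htc, hts⟩ := exists_mem_nhds_isClosed_subset hmem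
    refine ⟨interior t, ⟨isOpen_interior, mem_interior_iff_mem_nhds.2 htm⟩, ?_⟩
    calc closure (interior t) ⊆ closure t := closure_mono interior_subset
      _ = t := htc.closure_eq
      _ ⊆ W ∩ U n := hts
  choose V hV hVcl using step
  let Orec : ℕ → {W : Set Z // IsOpen W ∧ z ∈ W} := fun n =>
    Nat.rec ⟨V univ isOpen_univ (mem_univ z) 0, hV univ isOpen_univ (mem_univ z) 0⟩
      (fun n p => ⟨V p.1 p.2.1 p.2.2 (n + 1), hV p.1 p.2.1 p.2.2 (n + 1)⟩) n
  set O : ℕ → Set Z := fun n => (Orec n).1 with hO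
  have hOrec : ∀ n, O (n+1) = V (Orec n).1 (Orec n).2.1 (Orec n).2.2 (n+1) := fun n => rfl
  have hOo : ∀ n, IsOpen (O n) := fun n => (Orec n).2.1
  have hOz : ∀ n, z ∈ O n := fun n => (Orec n).2.2
  have hOcl : ∀ n, closure (O (n+1)) ⊆ O n := by
    intro n
    rw [hOrec n]
    exact fun w hw => ((hVcl (Orec n).1 (Orec n).2.1 (Orec n).2.2 (n+1)) hw).1
  have hOU : ∀ n, O n ⊆ U n := by
    intro n
    cases n with
    | zero =>
      intro w hw
      exact ((hVcl univ isOpen_univ (mem_univ z) 0) (subset_closure hw)).2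
    | succ m =>
      intro w hw
      rw [hOrec m] at hw
      exact ((hVcl (Orec m).1 (Orec m).2.1 (Orec m).2.2 (m+1)) (subset_closure hw)).2
  refine ⟨O, hOo, hOz, hOcl, hOU, ?_⟩
  intro N hzN hNo
  by_contra hcon
  push_neg at hcon
  have hD : ∀ n, (closure (O (n+1)) ∩ Nᶜ).Nonempty := by
    intro n
    obtain ⟨w, hw1, hw2⟩ := not_subset.1 (hcon (n+1))
    exact ⟨w, subset_closure hw1, hw2⟩
  have hanti : Antitone fun n => closure (O (n+1)) ∩ Nᶜ := by
    refine antitone_nat_of_succ_le fun n => ?_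
    refine inter_subset_inter_left _ ?_
    exact subset_closure.trans ((closure_mono ((hOcl (n+1)).trans subset_closure)).trans
      (by rw [closure_closure]))
  obtain ⟨q, hq⟩ := IsCompact.nonempty_iInter_of_directed_nonempty_isCompact_isClosed
    (fun n => closure (O (n+1)) ∩ Nᶜ) hanti.directed_ge hD
    (fun n => (isClosed_closure.inter hNo.isClosed_compl).isCompact)
    (fun n => isClosed_closure.inter hNo.isClosed_compl)
  have hqz : q = z := by
    have hmem : q ∈ ⋂ n, U n := by
      refine mem_iInter.2 fun n => ?_
      have hq1 : q ∈ closure (O (n+1)) := (mem_iInter.1 hq n).1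
      exact hOU n (hOcl n hq1)
    rw [hU] at hmem
    exact hmem
  have hqN : q ∈ Nᶜ := (mem_iInter.1 hq 0).2
  rw [hqz] at hqN
  exact hqN hzN


lemma shrink_open {V : Set Z} {p : Z} (hVo : IsOpen V) (hp : p ∈ V) :
    ∃ W, IsOpen W ∧ p ∈ W ∧ closure W ⊆ V := by
  obtain ⟨t, htm, htc, hts⟩ := exists_mem_nhds_isClosed_subset (hVo.mem_nhds hp)
  refine ⟨interior t, isOpen_interior, mem_interior_iff_mem_nhds.2 htm, ?_⟩
  calc closure (interior t) ⊆ closure t := closure_mono interior_subset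
    _ = t := htc.closure_eq
    _ ⊆ V := hts

/-! ### Gδ points belong to dense C*-embedded subsets -/

theorem mem_of_dense_cstar_embedded (A : Set Z) (hA : Dense A) (z : Z)
    (U : ℕ → Set Z) (hUo : ∀ n, IsOpen (U n)) (hUz : ∀ n, z ∈ U n) (hU : ⋂ n, U n = {z})
    (hext : ∀ f : A → ℝ, Continuous f → (∀ a, f a ∈ Icc (0:ℝ) 1) →
      ∃ F : Z → ℝ, Continuous F ∧ ∀ a : A, F a = f a) :
    z ∈ A := by
  by_contra hzA
  obtain ⟨O, hOo, hOz, hOcl, hOU, hObase⟩ := exists_nested_base U hUo hUz hU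
  -- Urysohn functions θ n : 0 on closure (O (n+1)), 1 off O n
  have hθex : ∀ n : ℕ, ∃ θ : C(Z, ℝ), EqOn θ 0 (closure (O (n+1))) ∧ EqOn θ 1 (O n)ᶜ ∧
      ∀ w, θ w ∈ Icc (0:ℝ) 1 := by
    intro n
    refine exists_continuous_zero_one_of_isClosed isClosed_closure (hOo n).isClosed_compl ?_
    rw [disjoint_compl_right_iff_subset]
    exact hOcl n
  choose θ hθ0 hθ1 hθI using hθex
  set Θ : Z → ℝ := fun w => ∑' n, (1/2 : ℝ)^n * θ n w with hΘ
  have hsummable : ∀ w, Summable fun n => (1/2 : ℝ)^n * θ n w := by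
    intro w
    refine Summable.of_nonneg_of_le (fun n => ?_) (fun n => ?_)
      (summable_geometric_of_lt_one (by norm_num) (by norm_num) (r := (1/2 : ℝ)))
    · exact mul_nonneg (by positivity) (hθI n w).1
    · calc (1/2 : ℝ)^n * θ n w ≤ (1/2 : ℝ)^n * 1 :=
            mul_le_mul_of_nonneg_left (hθI n w).2 (by positivity)
        _ = (1/2 : ℝ)^n := mul_one _
  have hΘcont : Continuous Θ := by
    refine continuous_tsum (fun n => continuous_const.mul (θ n).continuous)
      (summable_geometric_of_lt_one (by norm_num) (by norm_num) (r := (1/2 : ℝ))) ?_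
    intro n w
    rw [Real.norm_eq_abs, abs_mul, abs_of_nonneg (by positivity : (0:ℝ) ≤ (1/2:ℝ)^n),
      abs_of_nonneg (hθI n w).1]
    calc (1/2 : ℝ)^n * θ n w ≤ (1/2 : ℝ)^n * 1 :=
          mul_le_mul_of_nonneg_left (hθI n w).2 (by positivity)
      _ = (1/2 : ℝ)^n := mul_one _
  have hΘz : Θ z = 0 := by
    have : ∀ n, (1/2 : ℝ)^n * θ n z = 0 := by
      intro n
      rw [hθ0 n (subset_closure (hOz (n+1))), Pi.zero_apply, mul_zero]
    calc Θ z = ∑' (_ : ℕ), (0:ℝ) := tsum_congr this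
      _ = 0 := tsum_zero
  have hΘnonneg : ∀ w, 0 ≤ Θ w := fun w =>
    tsum_nonneg fun n => mul_nonneg (by positivity) (hθI n w).1
  have hΘpos : ∀ w, w ≠ z → 0 < Θ w := by
    intro w hw
    have hn : ∃ n, w ∉ U n := by
      by_contra hcon
      push_neg at hcon
      have : w ∈ ⋂ n, U n := mem_iInter.2 hcon
      rw [hU] at this
      exact hw this
    obtain ⟨n, hn⟩ := hn
    have hwO : w ∉ O n := fun hmem => hn (hOU n hmem)
    have hval : θ n w = 1 := hθ1 n hwO
    have : (1/2 : ℝ)^n * θ n w ≤ Θ w :=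
      Summable.le_tsum (hsummable w) n fun m _ => mul_nonneg (by positivity) (hθI m w).1
    rw [hval] at this
    calc (0:ℝ) < (1/2 : ℝ)^n * 1 := by positivity
      _ ≤ Θ w := this
  -- points with small Θ are in any open neighbourhood of z
  have hloc : ∀ N : Set Z, IsOpen N → z ∈ N → ∃ ε > 0, ∀ w, Θ w < ε → w ∈ N := by
    intro N hNo hzN
    rcases eq_empty_or_nonempty Nᶜ with hempty | hne
    · exact ⟨1, one_pos, fun w _ => by
        by_contra hw
        exact absurd (Set.mem_compl hw) (by rw [hempty]; exact notMem_empty w)⟩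
    · obtain ⟨w₀, hw₀K, hw₀min⟩ := (hNo.isClosed_compl.isCompact).exists_isMinOn hne
        hΘcont.continuousOn
      refine ⟨Θ w₀, hΘpos w₀ (fun hcon => (hcon ▸ hw₀K) hzN), fun w hw => ?_⟩
      by_contra hwN
      exact absurd (hw₀min (Set.mem_compl hwN)) (not_le.2 hw)
  -- recursively pick points of A with small positive Θ
  have pick : ∀ d : ℝ, 0 < d → ∃ a, a ∈ A ∧ 0 < Θ a ∧ Θ a < d := by
    intro d hd
    have hopen : IsOpen (Θ ⁻¹' Iio d) := hΘcont.isOpen_preimage _ isOpen_Iio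
    have hnon : (Θ ⁻¹' Iio d).Nonempty := ⟨z, by simpa [hΘz] using hd⟩
    obtain ⟨a, ha1, ha2⟩ := hA.inter_open_nonempty _ hopen hnon
    refine ⟨a, ha2, hΘpos a (fun hc => hzA (hc ▸ ha2)), ha1⟩
  choose pf pfA pfpos pflt using pick
  let aseq : ℕ → {a : Z // a ∈ A ∧ 0 < Θ a} := fun n =>
    Nat.rec ⟨pf 1 one_pos, pfA 1 one_pos, pfpos 1 one_pos⟩
      (fun _ p => ⟨pf (Θ p.1 / 5) (div_pos p.2.2 (by norm_num)),
        pfA (Θ p.1 / 5) (div_pos p.2.2 (by norm_num)),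
        pfpos (Θ p.1 / 5) (div_pos p.2.2 (by norm_num))⟩) n
  set τ : ℕ → ℝ := fun n => Θ (aseq n).1 with hτdef
  have hτpos : ∀ n, 0 < τ n := fun n => (aseq n).2.2
  have hτ0 : τ 0 < 1 := pflt 1 one_pos
  have hτsucc : ∀ n, τ (n+1) < τ n / 5 := fun n => pflt (τ n / 5) (div_pos (hτpos n) (by norm_num))
  have hτanti : StrictAnti τ := by
    refine strictAnti_nat_of_succ_lt fun n => ?_
    calc τ (n+1) < τ n / 5 := hτsucc n
      _ < τ n := by have := hτpos n; linarith
  have hτlt : ∀ n, τ n < (1/5 : ℝ)^n := by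
    intro n
    induction n with
    | zero => simpa using hτ0
    | succ m ih =>
      calc τ (m+1) < τ m / 5 := hτsucc m
        _ < (1/5 : ℝ)^m / 5 := by linarith
        _ = (1/5 : ℝ)^(m+1) := by ring
  have hτtend : Tendsto τ atTop (𝓝 0) := by
    refine squeeze_zero (fun n => (hτpos n).le) (fun n => (hτlt n).le) ?_
    exact tendsto_pow_atTop_nhds_zero_of_lt_one (by norm_num) (by norm_num)
  have hatend : Tendsto (fun n => ((aseq n).1 : Z)) atTop (𝓝 z) := by
    rw [(nhds_basis_opens z).tendsto_right_iff]
    rintro N ⟨hzN, hNo⟩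
    obtain ⟨ε, hε, hεN⟩ := hloc N hNo hzN
    filter_upwards [hτtend.eventually_lt_const hε] with n hn
    · exact hεN _ hn
  -- even/odd value sets
  have hdouble : Tendsto (fun j : ℕ => 2*j) atTop atTop :=
    tendsto_atTop_mono (f := fun j : ℕ => j) (fun j => by show j ≤ 2*j; omega) tendsto_id
  have hdouble1 : Tendsto (fun j : ℕ => 2*j+1) atTop atTop :=
    tendsto_atTop_mono (f := fun j : ℕ => j) (fun j => by show j ≤ 2*j+1; omega) tendsto_id
  have hσ0tend : Tendsto (fun j : ℕ => τ (2*j)) atTop (𝓝 0) := hτtend.comp hdouble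
  have hσ1tend : Tendsto (fun j : ℕ => τ (2*j+1)) atTop (𝓝 0) := hτtend.comp hdouble1
  set S0 : Set ℝ := insert 0 (range fun j : ℕ => τ (2*j)) with hS0def
  set S1 : Set ℝ := insert 0 (range fun j : ℕ => τ (2*j+1)) with hS1def
  have hS0closed : IsClosed S0 := hσ0tend.isCompact_insert_range.isClosed
  have hS1closed : IsClosed S1 := hσ1tend.isCompact_insert_range.isClosed
  have hS0ne : S0.Nonempty := ⟨0, mem_insert _ _⟩
  have hS1ne : S1.Nonempty := ⟨0, mem_insert _ _⟩
  have hτinj : Function.Injective τ := hτanti.injective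
  have hmemS0 : ∀ j, τ (2*j) ∈ S0 := fun j => mem_insert_of_mem _ ⟨j, rfl⟩
  have hmemS1 : ∀ j, τ (2*j+1) ∈ S1 := fun j => mem_insert_of_mem _ ⟨j, rfl⟩
  have hnotS0 : ∀ j, τ (2*j+1) ∉ S0 := by
    intro j hj
    rcases mem_insert_iff.1 hj with h0 | ⟨k, hk⟩
    · exact (hτpos (2*j+1)).ne' h0
    · have hk' : τ (2*k) = τ (2*j+1) := hk
      have := hτinj (a₁ := 2*k) (a₂ := 2*j+1) hk'
      omega
  have hdenpos : ∀ t : ℝ, 0 < t → t ∈ S0 → t ∈ S1 → False := by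
    intro t ht h1 h2
    rcases mem_insert_iff.1 h1 with rfl | ⟨j, hj⟩
    · exact lt_irrefl _ ht
    · rcases mem_insert_iff.1 h2 with h0 | ⟨k, hk⟩
      · rw [h0] at hj
        exact (hτpos (2*j)).ne' hj
      · have hj' : τ (2*j) = t := hj
        have hk' : τ (2*k+1) = t := hk
        rw [← hj'] at hk'
        have := hτinj (a₁ := 2*k+1) (a₂ := 2*j) hk'
        omega
  have hdist : ∀ t : ℝ, 0 < t → 0 < Metric.infDist t S0 + Metric.infDist t S1 := by
    intro t ht
    by_contra hcon
    push_neg at hcon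
    have hd0 : (0:ℝ) ≤ Metric.infDist t S0 := Metric.infDist_nonneg
    have hd1 : (0:ℝ) ≤ Metric.infDist t S1 := Metric.infDist_nonneg
    have h0 : Metric.infDist t S0 = 0 := by linarith
    have h1 : Metric.infDist t S1 = 0 := by linarith
    exact hdenpos t ht ((hS0closed.mem_iff_infDist_zero hS0ne).2 h0)
      ((hS1closed.mem_iff_infDist_zero hS1ne).2 h1)
  -- the oscillating function on A
  have hΘApos : ∀ a : A, 0 < Θ a := fun a => hΘpos a.1 (fun hc => hzA (hc ▸ a.2))
  set w : ℝ → ℝ := fun t => Metric.infDist t S0 / (Metric.infDist t S0 + Metric.infDist t S1)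
    with hwdef
  set f : A → ℝ := fun a => w (Θ a) with hfdef
  have hfc : Continuous f := by
    refine Continuous.div ?_ ?_ ?_
    · exact (Metric.continuous_infDist_pt S0).comp (hΘcont.comp continuous_subtype_val)
    · exact ((Metric.continuous_infDist_pt S0).comp (hΘcont.comp continuous_subtype_val)).add
        ((Metric.continuous_infDist_pt S1).comp (hΘcont.comp continuous_subtype_val))
    · exact fun a => (hdist (Θ a) (hΘApos a)).ne'
  have hfI : ∀ a : A, f a ∈ Icc (0:ℝ) 1 := by
    intro a
    constructor
    · exact div_nonneg Metric.infDist_nonneg (add_nonneg Metric.infDist_nonneg Metric.infDist_nonneg)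
    · rw [div_le_one (hdist (Θ a) (hΘApos a))]
      exact le_add_of_nonneg_right Metric.infDist_nonneg
  obtain ⟨F, hFc, hFeq⟩ := hext f hfc hfI
  set α : ℕ → A := fun n => ⟨(aseq n).1, (aseq n).2.1⟩ with hα
  have hvaleven : ∀ j : ℕ, F (α (2*j)) = 0 := by
    intro j
    rw [hFeq]
    show w (τ (2*j)) = 0
    rw [hwdef]
    simp only []
    rw [Metric.infDist_zero_of_mem (hmemS0 j), zero_div]
  have hvalodd : ∀ j : ℕ, F (α (2*j+1)) = 1 := by
    intro j
    rw [hFeq]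
    show w (τ (2*j+1)) = 1
    have hd0 : 0 < Metric.infDist (τ (2*j+1)) S0 :=
      (hS0closed.notMem_iff_infDist_pos hS0ne).1 (hnotS0 j)
    rw [hwdef]
    simp only []
    rw [Metric.infDist_zero_of_mem (hmemS1 j), add_zero, div_self hd0.ne']
  have htendF : Tendsto (fun n => F ((aseq n).1)) atTop (𝓝 (F z)) :=
    (hFc.tendsto z).comp hatend
  have hFz0 : F z = 0 := by
    have h1 : Tendsto (fun j : ℕ => F ((aseq (2*j)).1)) atTop (𝓝 (F z)) :=
      htendF.comp hdouble
    have h2 : (fun j : ℕ => F ((aseq (2*j)).1)) = fun _ => (0:ℝ) :=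
      funext fun j => hvaleven j
    rw [h2] at h1
    exact tendsto_nhds_unique h1 tendsto_const_nhds
  have hFz1 : F z = 1 := by
    have h1 : Tendsto (fun j : ℕ => F ((aseq (2*j+1)).1)) atTop (𝓝 (F z)) :=
      htendF.comp hdouble1
    have h2 : (fun j : ℕ => F ((aseq (2*j+1)).1)) = fun _ => (1:ℝ) :=
      funext fun j => hvalodd j
    rw [h2] at h1
    exact tendsto_nhds_unique h1 tendsto_const_nhds
  rw [hFz0] at hFz1
  exact zero_ne_one hFz1


/-! ### Biseparating data -/

/-- The cozero set of a bounded continuous function. -/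
def coz {W G : Type*} [TopologicalSpace W] [NormedAddCommGroup G] (f : W →ᵇ G) : Set W :=
  {x | f x ≠ 0}

/-- A bundled additive biseparating bijection. -/
structure BisepData (X Y E F : Type*) [TopologicalSpace X] [TopologicalSpace Y]
    [NormedAddCommGroup E] [NormedSpace ℝ E] [NormedAddCommGroup F] [NormedSpace ℝ F] where
  toEquiv : (X →ᵇ E) ≃ (Y →ᵇ F)
  add' : ∀ f g, toEquiv (f + g) = toEquiv f + toEquiv g
  sep1 : ∀ f g : X →ᵇ E, (∀ x, f x = 0 ∨ g x = 0) → ∀ y, toEquiv f y = 0 ∨ toEquiv g y = 0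
  sep2 : ∀ g g' : Y →ᵇ F, (∀ y, g y = 0 ∨ g' y = 0) →
    ∀ x, toEquiv.symm g x = 0 ∨ toEquiv.symm g' x = 0

namespace BisepData

variable {X Y E F : Type*} [TopologicalSpace X] [TopologicalSpace Y]
  [NormedAddCommGroup E] [NormedSpace ℝ E] [NormedAddCommGroup F] [NormedSpace ℝ F]

/-- The inverse of a biseparating bijection is biseparating. -/
def symm (D : BisepData X Y E F) : BisepData Y X F E where
  toEquiv := D.toEquiv.symm
  add' := fun f g => by
    apply D.toEquiv.injective
    rw [D.add', Equiv.apply_symm_apply, Equiv.apply_symm_apply, Equiv.apply_symm_apply]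
  sep1 := D.sep2
  sep2 := fun f f' h => by
    simpa only [Equiv.symm_symm] using D.sep1 f f' h

@[simp] lemma symm_toEquiv (D : BisepData X Y E F) : D.symm.toEquiv = D.toEquiv.symm := rfl

@[simp] lemma symm_symm (D : BisepData X Y E F) : D.symm.symm = D := rfl

lemma map_zero (D : BisepData X Y E F) : D.toEquiv 0 = 0 := by
  have h := D.add' 0 0
  rw [add_zero] at h
  exact (by simpa using h)

lemma map_sum (D : BisepData X Y E F) {ι : Type*} [DecidableEq ι] (s : Finset ι)
    (g : ι → X →ᵇ E) :
    D.toEquiv (∑ i ∈ s, g i) = ∑ i ∈ s, D.toEquiv (g i) := by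
  induction s using Finset.induction_on with
  | empty => simpa using D.map_zero
  | insert a s h ih => rw [Finset.sum_insert h, Finset.sum_insert h, D.add', ih]

end BisepData

/-! ### The support machinery -/

section Support

variable {X Y E F : Type*} [TopologicalSpace X] [T35Space X] [TopologicalSpace Y] [T35Space Y]
  [NormedAddCommGroup E] [NormedSpace ℝ E] [NormedAddCommGroup F] [NormedSpace ℝ F]
  [Nonempty X] [Nonempty Y] [Nontrivial E] [Nontrivial F]

variable (D : BisepData X Y E F)

/-- The functions not annihilated by `y`. -/
def Ay (y : Y) : Set (X →ᵇ E) := {f | D.toEquiv f y ≠ 0}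

lemma Ay_nonempty (y : Y) : (Ay D y).Nonempty := by
  obtain ⟨e, he⟩ := exists_ne (0 : F)
  refine ⟨D.toEquiv.symm (BoundedContinuousFunction.const Y e), ?_⟩
  show D.toEquiv (D.toEquiv.symm (BoundedContinuousFunction.const Y e)) y ≠ 0
  rw [Equiv.apply_symm_apply]
  simpa using he

lemma suppSet_nonempty (y : Y) :
    (⋂ f ∈ Ay D y, closure (stoneCechUnit '' coz f)).Nonempty := by
  haveI : Nonempty (StoneCech X) := ⟨stoneCechUnit (Classical.arbitrary X)⟩
  rw [nonempty_iff_ne_empty]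
  intro hcon
  have hcon' : (univ : Set (StoneCech X)) ∩
      ⋂ (f : Ay D y), closure (stoneCechUnit '' coz f.1) = ∅ := by
    rw [univ_inter,
      show (⋂ (f : Ay D y), closure (stoneCechUnit '' coz f.1)) =
        ⋂ f ∈ Ay D y, closure (stoneCechUnit '' coz f) from (biInter_eq_iInter (Ay D y) (fun f _ => closure (stoneCechUnit '' coz f))).symm]
    exact hcon
  obtain ⟨t, ht⟩ := IsCompact.elim_finite_subfamily_closed isCompact_univ
    (fun f : Ay D y => closure (stoneCechUnit '' coz f.1)) (fun _ => isClosed_closure) hcon'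
  have htne : t.Nonempty := by
    rcases Finset.eq_empty_or_nonempty t with rfl | h
    · simp only [Finset.notMem_empty, iInter_of_empty, iInter_univ, inter_univ] at ht
      exact absurd ht univ_nonempty.ne_empty
    · exact h
  obtain ⟨i₀, hi₀⟩ := htne
  classical
  set Z := StoneCech X
  set U : t → Set Z := fun j => (closure (stoneCechUnit '' coz j.1.1))ᶜ with hUdef
  have hUcover : (univ : Set Z) ⊆ ⋃ j, U j := by
    intro z _
    by_contra hz
    rw [mem_iUnion] at hz
    push_neg at hz
    have hmem : z ∈ (univ : Set Z) ∩ ⋂ i ∈ t, closure (stoneCechUnit '' coz i.1) := by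
      refine ⟨mem_univ z, ?_⟩
      refine mem_biInter fun i hi => ?_
      have := hz ⟨i, hi⟩
      simpa [hUdef, not_not] using this
    rw [ht] at hmem
    exact hmem
  obtain ⟨ρ, hρ⟩ := PartitionOfUnity.exists_isSubordinate isClosed_univ U
    (fun j => isClosed_closure.isOpen_compl) hUcover
  set f₀ : X →ᵇ E := i₀.1 with hf₀
  set g : t → (X →ᵇ E) := fun j =>
    cmul (fun x => ρ j (stoneCechUnit x))
      ((ρ j).continuous.comp continuous_stoneCechUnit)
      (fun x => ρ.nonneg j _) (fun x => ρ.le_one j _) f₀ with hgdef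
  have hsum : ∑ j : t, g j = f₀ := by
    ext x
    rw [BoundedContinuousFunction.coe_sum, Finset.sum_apply]
    have hone : ∑ j : t, ρ j (stoneCechUnit x) = 1 := by
      rw [← finsum_eq_sum_of_fintype]
      exact ρ.sum_eq_one (mem_univ _)
    calc ∑ j : t, g j x = ∑ j : t, ρ j (stoneCechUnit x) • f₀ x := by
          refine Finset.sum_congr rfl fun j _ => ?_
          rw [hgdef]
          rfl
      _ = (∑ j : t, ρ j (stoneCechUnit x)) • f₀ x := by rw [Finset.sum_smul]
      _ = f₀ x := by rw [hone, one_smul]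
  have hTf₀ : D.toEquiv f₀ y ≠ 0 := i₀.2
  have hTsum : D.toEquiv f₀ = ∑ j : t, D.toEquiv (g j) := by
    rw [← hsum, D.map_sum]
  have hex : ∃ j : t, D.toEquiv (g j) y ≠ 0 := by
    have hval : (∑ j : t, D.toEquiv (g j)) y ≠ 0 := by
      rw [← hTsum]; exact hTf₀
    rw [BoundedContinuousFunction.coe_sum, Finset.sum_apply] at hval
    obtain ⟨j, _, hj⟩ := Finset.exists_ne_zero_of_sum_ne_zero hval
    exact ⟨j, hj⟩
  obtain ⟨j, hj⟩ := hex
  have hdisj : ∀ x, g j x = 0 ∨ (j.1.1 : X →ᵇ E) x = 0 := by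
    intro x
    by_cases hf : (j.1.1 : X →ᵇ E) x = 0
    · exact Or.inr hf
    · left
      have hmem : stoneCechUnit x ∈ closure (stoneCechUnit '' coz j.1.1) :=
        subset_closure ⟨x, hf, rfl⟩
      have hzero : ρ j (stoneCechUnit x) = 0 := by
        by_contra hne
        have : stoneCechUnit x ∈ tsupport (ρ j) := subset_tsupport _ (by simpa using hne)
        exact (hρ j this) hmem
      show ρ j (stoneCechUnit x) • f₀ x = 0
      rw [hzero, zero_smul]
  have := D.sep1 (g j) j.1.1 hdisj y
  rcases this with h | h
  · exact hj h
  · exact j.1.2 h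

/-- The support point of `y` in the Stone–Čech compactification of `X`. -/
def supp (y : Y) : StoneCech X := (suppSet_nonempty D y).some

lemma supp_mem {y : Y} {f : X →ᵇ E} (hf : D.toEquiv f y ≠ 0) :
    supp D y ∈ closure (stoneCechUnit '' coz f) :=
  mem_iInter₂.1 (suppSet_nonempty D y).some_mem f hf

lemma eq_zero_of_vanish_near (y : Y) (f : X →ᵇ E) (V : Set (StoneCech X))
    (hVo : IsOpen V) (hV : supp D y ∈ V) (hvan : ∀ x, stoneCechUnit x ∈ V → f x = 0) :
    D.toEquiv f y = 0 := by
  by_contra hne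
  have hmem := supp_mem D hne
  have hdisj : stoneCechUnit '' coz f ⊆ Vᶜ := by
    rintro _ ⟨x, hx, rfl⟩ hxV
    exact hx (hvan x hxV)
  have hcl : supp D y ∈ closure Vᶜ := closure_mono hdisj hmem
  rw [hVo.isClosed_compl.closure_eq] at hcl
  exact hcl hV

lemma exists_localized (y : Y) (V : Set (StoneCech X)) (hVo : IsOpen V)
    (hV : supp D y ∈ V) :
    ∃ f : X →ᵇ E, D.toEquiv f y ≠ 0 ∧ closure (stoneCechUnit '' coz f) ⊆ V := by
  obtain ⟨V₂, hV₂o, hV₂, hV₂cl⟩ := shrink_open hVo hV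
  obtain ⟨V₁, hV₁o, hV₁, hV₁cl⟩ := shrink_open hV₂o hV₂
  obtain ⟨u, hu0, hu1, huI⟩ := exists_continuous_zero_one_of_isClosed
    hV₂o.isClosed_compl isClosed_closure
    (by
      rw [disjoint_compl_left_iff_subset]
      exact hV₁cl)
  obtain ⟨g, hg⟩ := Ay_nonempty D y
  have hgy : D.toEquiv g y ≠ 0 := hg
  set w : X → ℝ := fun x => u (stoneCechUnit x) with hwdef
  have hwc : Continuous w := u.continuous.comp continuous_stoneCechUnit
  have hw0 : ∀ x, 0 ≤ w x := fun x => (huI _).1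
  have hw1 : ∀ x, w x ≤ 1 := fun x => (huI _).2
  refine ⟨cmul w hwc hw0 hw1 g, ?_, ?_⟩
  · have hdecomp := cmul_compl_add w hwc hw0 hw1 g
    have hTdecomp := D.add' (cmul (fun x => 1 - w x) (continuous_const.sub hwc)
      (fun x => by simp; linarith [hw1 x]) (fun x => by simp; linarith [hw0 x]) g)
      (cmul w hwc hw0 hw1 g)
    rw [hdecomp] at hTdecomp
    have hzero : D.toEquiv (cmul (fun x => 1 - w x) (continuous_const.sub hwc)
        (fun x => by simp; linarith [hw1 x]) (fun x => by simp; linarith [hw0 x]) g) y = 0 := by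
      refine eq_zero_of_vanish_near D y _ V₁ hV₁o hV₁ ?_
      intro x hx
      show (1 - u (stoneCechUnit x)) • g x = 0
      have h1 : u (stoneCechUnit x) = 1 := hu1 (subset_closure hx)
      rw [h1]
      simp
    intro hcon
    have := congrArg (fun q => q y) hTdecomp
    simp only [BoundedContinuousFunction.coe_add, Pi.add_apply] at this
    rw [hzero, hcon, add_zero] at this
    exact hgy this
  · have hsub : stoneCechUnit '' coz (cmul w hwc hw0 hw1 g) ⊆ V₂ := by
      rintro _ ⟨x, hx, rfl⟩
      have hwx : w x ≠ 0 := by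
        intro h0
        apply hx
        show w x • g x = 0
        rw [h0, zero_smul]
      by_contra hmem
      exact hwx (hu0 hmem)
    calc closure (stoneCechUnit '' coz (cmul w hwc hw0 hw1 g)) ⊆ closure V₂ :=
          closure_mono hsub
      _ ⊆ V := hV₂cl

lemma isOpen_coz {W G : Type*} [TopologicalSpace W] [NormedAddCommGroup G] (f : W →ᵇ G) :
    IsOpen (coz f) :=
  isOpen_compl_singleton.preimage f.continuous

lemma continuous_supp : Continuous (supp D) := by
  rw [continuous_iff_continuousAt]
  intro y
  rw [ContinuousAt, (nhds_basis_opens (supp D y)).tendsto_right_iff]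
  rintro V ⟨hV, hVo⟩
  obtain ⟨f, hfy, hfcl⟩ := exists_localized D y V hVo hV
  filter_upwards [(isOpen_coz (D.toEquiv f)).mem_nhds hfy] with y' hy'
  exact hfcl (supp_mem D hy')

lemma denseRange_supp : DenseRange (supp D) := by
  rw [DenseRange, dense_iff_inter_open]
  rintro U hUo ⟨z₀, hz₀⟩
  obtain ⟨V₁, hV₁o, hV₁, hV₁cl⟩ := shrink_open hUo hz₀
  obtain ⟨x₀, hx₀⟩ := denseRange_stoneCechUnit.exists_mem_open hV₁o ⟨z₀, hV₁⟩
  obtain ⟨φ, hφ0, hφ1, hφI⟩ := exists_continuous_zero_one_of_isClosed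
    hV₁o.isClosed_compl (isClosed_singleton (x := stoneCechUnit x₀))
    (by
      rw [disjoint_compl_left_iff_subset]
      exact singleton_subset_iff.2 hx₀)
  obtain ⟨e, he⟩ := exists_ne (0 : E)
  set w : X → ℝ := fun x => φ (stoneCechUnit x) with hwdef
  have hwc : Continuous w := φ.continuous.comp continuous_stoneCechUnit
  set f : X →ᵇ E := cmul w hwc (fun x => (hφI _).1) (fun x => (hφI _).2)
    (BoundedContinuousFunction.const X e) with hfdef
  have hfx₀ : f x₀ = e := by
    show w x₀ • (BoundedContinuousFunction.const X e) x₀ = e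
    have h1 : φ (stoneCechUnit x₀) = 1 := hφ1 rfl
    rw [hwdef]
    simp only [BoundedContinuousFunction.const_apply]
    rw [h1, one_smul]
  have hfne : f ≠ 0 := fun hcon => he (by rw [← hfx₀, hcon]; simp)
  have hTfne : D.toEquiv f ≠ 0 := fun hcon => hfne (by
    have := congrArg D.toEquiv.symm hcon
    rwa [Equiv.symm_apply_apply, ← D.map_zero, Equiv.symm_apply_apply] at this)
  obtain ⟨y, hy⟩ := DFunLike.ne_iff.1 hTfne
  have hy' : D.toEquiv f y ≠ 0 := by simpa using hy
  refine ⟨supp D y, ?_, ⟨y, rfl⟩⟩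
  have hsub : stoneCechUnit '' coz f ⊆ V₁ := by
    rintro _ ⟨x, hx, rfl⟩
    by_contra hmem
    apply hx
    show w x • (BoundedContinuousFunction.const X e) x = 0
    rw [hwdef]
    simp only [BoundedContinuousFunction.const_apply]
    rw [hφ0 hmem]
    simp
  exact hV₁cl ((closure_mono hsub) (supp_mem D hy'))

/-- The continuous extension of the dual support map to the compactification. -/
def Kex : StoneCech X → StoneCech Y := stoneCechExtend (continuous_supp D.symm)

lemma Kex_unit (x : X) : Kex D (stoneCechUnit x) = supp D.symm x :=
  congrFun (stoneCechExtend_extends (continuous_supp D.symm)) x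

lemma continuous_Kex : Continuous (Kex D) := continuous_stoneCechExtend _

/-- The key compatibility: the extension of the dual support map sends the support of `y`
back to `y`. -/
lemma Kex_supp (y : Y) : Kex D (supp D y) = stoneCechUnit y := by
  by_contra hne
  obtain ⟨Nq, Nb, hNqo, hNbo, hq, hb, hdisjN⟩ := t2_separation hne
  obtain ⟨W, hWo, hqW, hWcl⟩ := shrink_open hNqo hq
  have hιy : stoneCechUnit y ∉ closure W := fun hmem =>
    (disjoint_left.1 hdisjN) (hWcl hmem) hb
  obtain ⟨u', hu'0, hu'1, hu'I⟩ := exists_continuous_zero_one_of_isClosed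
    isClosed_closure (isClosed_singleton (x := stoneCechUnit y))
    (by
      rw [disjoint_singleton_right]
      exact hιy)
  set V : Set (StoneCech X) := (Kex D)⁻¹' W with hVdef
  have hVo : IsOpen V := hWo.preimage (continuous_Kex D)
  have hVmem : supp D y ∈ V := by
    show Kex D (supp D y) ∈ W
    exact hqW
  obtain ⟨f, hfy, hfcl⟩ := exists_localized D y V hVo hVmem
  set g : Y →ᵇ F := D.toEquiv f with hgdef
  set w' : Y → ℝ := fun y' => u' (stoneCechUnit y') with hw'def
  have hw'c : Continuous w' := u'.continuous.comp continuous_stoneCechUnit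
  have hw'0 : ∀ y', 0 ≤ w' y' := fun y' => (hu'I _).1
  have hw'1 : ∀ y', w' y' ≤ 1 := fun y' => (hu'I _).2
  set g₁ : Y →ᵇ F := cmul w' hw'c hw'0 hw'1 g with hg₁def
  have hg₁y : g₁ y = g y := by
    show w' y • g y = g y
    have h1 : u' (stoneCechUnit y) = 1 := hu'1 rfl
    rw [hw'def]
    simp only []
    rw [h1, one_smul]
  have hgy : g y ≠ 0 := hfy
  have hdisj : ∀ x, D.toEquiv.symm g₁ x = 0 ∨ f x = 0 := by
    intro x
    by_cases hf : f x = 0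
    · exact Or.inr hf
    · left
      have hmemV : stoneCechUnit x ∈ V := hfcl (subset_closure ⟨x, hf, rfl⟩)
      have hkW : supp D.symm x ∈ W := by
        rw [← Kex_unit D x]
        exact hmemV
      have := eq_zero_of_vanish_near D.symm x g₁ W hWo hkW (by
        intro y' hy'
        show w' y' • g y' = 0
        have h0 : u' (stoneCechUnit y') = 0 := hu'0 (subset_closure hy')
        rw [hw'def]
        simp only []
        rw [h0, zero_smul])
      simpa using this
  have := D.sep1 (D.toEquiv.symm g₁) f hdisj y
  rcases this with h | h
  · rw [Equiv.apply_symm_apply] at h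
    rw [hg₁y] at h
    exact hgy h
  · exact hfy h

variable [FirstCountableTopology Y]

/-- The support point is a Gδ point of the compactification. -/
lemma exists_gdelta_supp (y : Y) :
    ∃ U : ℕ → Set (StoneCech X), (∀ n, IsOpen (U n)) ∧ (∀ n, supp D y ∈ U n) ∧
      (⋂ n, U n = {supp D y}) := by
  obtain ⟨B, hB⟩ := (𝓝 y).exists_antitone_basis
  have hvex : ∀ n, ∃ v : Y → ℝ, Continuous v ∧ (∀ y', v y' ∈ Icc (0:ℝ) 1) ∧ v y = 1 ∧
      ∀ y', y' ∉ interior (B n) → v y' = 0 := by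
    intro n
    have hyint : y ∈ interior (B n) :=
      mem_interior_iff_mem_nhds.2 (hB.1.mem_of_mem trivial)
    obtain ⟨v₀, hv₀c, hv₀y, hv₀K⟩ := CompletelyRegularSpace.completely_regular y
      (interior (B n))ᶜ isOpen_interior.isClosed_compl (by simpa using hyint)
    refine ⟨fun y' => 1 - (v₀ y' : ℝ), continuous_const.sub
      (continuous_subtype_val.comp hv₀c), fun y' => ?_, ?_, fun y' hy' => ?_⟩
    · have h1 := (v₀ y').2.1
      have h2 := (v₀ y').2.2
      simp only [mem_Icc]
      constructor <;> linarith
    · show 1 - (v₀ y : ℝ) = 1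
      rw [hv₀y]
      norm_num
    · show 1 - (v₀ y' : ℝ) = 0
      have h1 : v₀ y' = 1 := hv₀K hy'
      rw [h1]
      norm_num
  choose v hvc hvI hvy hv0 using hvex
  set Φ : ℕ → StoneCech X → ℝ := fun n z => bext (hvc n) (hvI n) (Kex D z) with hΦdef
  have hΦc : ∀ n, Continuous (Φ n) := fun n =>
    (bext_continuous (hvc n) (hvI n)).comp (continuous_Kex D)
  have hΦsupp : ∀ n (y' : Y), Φ n (supp D y') = v n y' := by
    intro n y'
    rw [hΦdef]
    simp only []
    rw [Kex_supp D y', bext_unit]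
  set U : ℕ → Set (StoneCech X) := fun n => (Φ n)⁻¹' (Ioi (1/3 : ℝ)) with hUdef
  refine ⟨U, fun n => isOpen_Ioi.preimage (hΦc n), fun n => ?_, ?_⟩
  · show Φ n (supp D y) ∈ Ioi (1/3 : ℝ)
    rw [hΦsupp n y, hvy n]
    norm_num
  · apply Subset.antisymm
    · intro z hz
      rw [mem_iInter] at hz
      -- Step A : z is in the closure of supports of points where v n is large
      have hstepA : ∀ n, z ∈ closure (supp D '' {y' | 1/4 < v n y'}) := by
        intro n
        by_contra hcon
        have hsub : (closure (supp D '' {y' | 1/4 < v n y'}))ᶜ ∩ range (supp D) ⊆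
            (Φ n)⁻¹' (Iic (1/4 : ℝ)) := by
          rintro _ ⟨hmemN, y'', rfl⟩
          show Φ n (supp D y'') ≤ 1/4
          rw [hΦsupp]
          by_contra hlt
          push_neg at hlt
          exact hmemN (subset_closure ⟨y'', hlt, rfl⟩)
        have hzc : z ∈ closure ((closure (supp D '' {y' | 1/4 < v n y'}))ᶜ ∩
            range (supp D)) := by
          rw [mem_closure_iff]
          intro O hOo hOz
          obtain ⟨q, hq1, hq2⟩ := (denseRange_supp D).inter_open_nonempty
            (O ∩ (closure (supp D '' {y' | 1/4 < v n y'}))ᶜ) (hOo.inter isClosed_closure.isOpen_compl)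
            ⟨z, hOz, hcon⟩
          exact ⟨q, hq1.1, hq1.2, hq2⟩
        have : z ∈ (Φ n)⁻¹' (Iic (1/4 : ℝ)) :=
          (IsClosed.closure_subset_iff (isClosed_Iic.preimage (hΦc n))).2 hsub hzc
        have hz' := hz n
        rw [hUdef] at hz'
        simp only [mem_preimage, mem_Ioi] at hz'
        simp only [mem_preimage, mem_Iic] at this
        linarith
      -- Step B : z = supp D y
      by_contra hzne
      rw [mem_singleton_iff] at hzne
      obtain ⟨G, hG0, hG1, hGI⟩ := exists_continuous_zero_one_of_isClosed
        (isClosed_singleton (x := z)) (isClosed_singleton (x := supp D y))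
        (by
          rw [disjoint_singleton]
          exact hzne)
      have hwc : Continuous fun y' => G (supp D y') := G.continuous.comp (continuous_supp D)
      have hM : {y' | 1/2 < G (supp D y')} ∈ 𝓝 y := by
        have : (1:ℝ)/2 < G (supp D y) := by
          rw [hG1 rfl]
          norm_num
        exact (isOpen_lt continuous_const hwc).mem_nhds this
      obtain ⟨n, -, hn⟩ := hB.1.mem_iff.1 hM
      have himg : supp D '' {y' | 1/4 < v n y'} ⊆ G⁻¹' (Ici (1/2 : ℝ)) := by
        rintro _ ⟨y'', hy'', rfl⟩
        have hy''M : y'' ∈ {y' | 1/2 < G (supp D y')} := by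
          apply hn
          by_contra hyB
          have h0 : v n y'' = 0 := hv0 n y'' (fun hint => hyB (interior_subset hint))
          have hy''' : 1/4 < v n y'' := hy''
          rw [h0] at hy'''
          norm_num at hy'''
        have hlt : 1/2 < G (supp D y'') := hy''M
        exact hlt.le
      have : z ∈ G⁻¹' (Ici (1/2 : ℝ)) :=
        (IsClosed.closure_subset_iff (isClosed_Ici.preimage G.continuous)).2 himg (hstepA n)
      simp only [mem_preimage, mem_Ici] at this
      rw [hG0 rfl] at this
      norm_num at this
    · rw [singleton_subset_iff, mem_iInter]
      intro n
      show Φ n (supp D y) ∈ Ioi (1/3 : ℝ)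
      rw [hΦsupp n y, hvy n]
      norm_num

/-- The extension property of the canonical image of `X` in its compactification. -/
lemma cstar_ext_range_unit :
    ∀ f : (range (stoneCechUnit : X → StoneCech X)) → ℝ, Continuous f →
      (∀ a, f a ∈ Icc (0:ℝ) 1) →
      ∃ F : StoneCech X → ℝ, Continuous F ∧ ∀ a : (range (stoneCechUnit : X → StoneCech X)),
        F a = f a := by
  intro f hfc hfI
  have huc : Continuous fun x : X => f ⟨stoneCechUnit x, mem_range_self x⟩ :=
    hfc.comp (Continuous.subtype_mk continuous_stoneCechUnit _)
  have huI : ∀ x : X, f ⟨stoneCechUnit x, mem_range_self x⟩ ∈ Icc (0:ℝ) 1 := fun x => hfI _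
  refine ⟨bext huc huI, bext_continuous _ _, ?_⟩
  rintro ⟨a, x, rfl⟩
  exact bext_unit huc huI x

/-- MAIN: the support of every point lies in the canonical image of `X`. -/
lemma supp_mem_range (y : Y) :
    supp D y ∈ range (stoneCechUnit : X → StoneCech X) := by
  obtain ⟨U, hUo, hUz, hU⟩ := exists_gdelta_supp D y
  exact mem_of_dense_cstar_embedded _ denseRange_stoneCechUnit _ U hUo hUz hU
    (cstar_ext_range_unit (X := X))

end Support

/-! ### Assembly of the homeomorphism -/

section Main

variable {X Y E F : Type*} [TopologicalSpace X] [T35Space X] [FirstCountableTopology X]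
  [TopologicalSpace Y] [T35Space Y] [FirstCountableTopology Y]
  [NormedAddCommGroup E] [NormedSpace ℝ E] [Nontrivial E]
  [NormedAddCommGroup F] [NormedSpace ℝ F] [Nontrivial F]
  [Nonempty X] [Nonempty Y]

theorem main_homeo (D : BisepData X Y E F) : Nonempty (X ≃ₜ Y) := by
  have hsuppX : ∀ y : Y, supp D y ∈ range (stoneCechUnit : X → StoneCech X) :=
    fun y => supp_mem_range D y
  have hsuppY : ∀ x : X, supp D.symm x ∈ range (stoneCechUnit : Y → StoneCech Y) :=
    fun x => supp_mem_range D.symm x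
  choose φ hφ using hsuppX
  choose ψ hψ using hsuppY
  have hinjX : Function.Injective (stoneCechUnit : X → StoneCech X) :=
    injective_stoneCechUnit_of_t35Space
  have hinjY : Function.Injective (stoneCechUnit : Y → StoneCech Y) :=
    injective_stoneCechUnit_of_t35Space
  have hleft : ∀ y, ψ (φ y) = y := by
    intro y
    apply hinjY
    calc stoneCechUnit (ψ (φ y)) = supp D.symm (φ y) := hψ (φ y)
      _ = Kex D (stoneCechUnit (φ y)) := (Kex_unit D (φ y)).symm
      _ = Kex D (supp D y) := by rw [hφ y]
      _ = stoneCechUnit y := Kex_supp D y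
  have hright : ∀ x, φ (ψ x) = x := by
    intro x
    apply hinjX
    calc stoneCechUnit (φ (ψ x)) = supp D (ψ x) := hφ (ψ x)
      _ = Kex D.symm (stoneCechUnit (ψ x)) := (Kex_unit D.symm (ψ x)).symm
      _ = Kex D.symm (supp D.symm x) := by rw [hψ x]
      _ = stoneCechUnit x := Kex_supp D.symm x
  have hφc : Continuous φ := by
    rw [isEmbedding_stoneCechUnit.continuous_iff]
    have : (stoneCechUnit : X → StoneCech X) ∘ φ = supp D := funext fun y => hφ y
    rw [this]
    exact continuous_supp D
  have hψc : Continuous ψ := by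
    rw [isEmbedding_stoneCechUnit.continuous_iff]
    have : (stoneCechUnit : Y → StoneCech Y) ∘ ψ = supp D.symm := funext fun x => hψ x
    rw [this]
    exact continuous_supp D.symm
  exact ⟨⟨⟨ψ, φ, hright, hleft⟩, hψc, hφc⟩⟩

end Main

end Stmt2Aux

open Stmt2Aux in
/-- If `X`, `Y` are first-countable Tychonoff spaces, `E`, `F` nontrivial real
normed spaces, and there exists a biseparating map `T : C*(X,E) → C*(Y,F)`, then `X` and `Y`
are homeomorphic. -/
theorem stmt_2 {X Y E F : Type*}
    [TopologicalSpace X] [T35Space X] [FirstCountableTopology X]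
    [TopologicalSpace Y] [T35Space Y] [FirstCountableTopology Y]
    [NormedAddCommGroup E] [NormedSpace ℝ E] [Nontrivial E]
    [NormedAddCommGroup F] [NormedSpace ℝ F] [Nontrivial F]
    (T : (X →ᵇ E) → (Y →ᵇ F))
    (hbij : Function.Bijective T)
    (hadd : ∀ f g : X →ᵇ E, T (f + g) = T f + T g)
    (hsep : ∀ f g : X →ᵇ E, (∀ x, ‖f x‖ * ‖g x‖ = 0) → ∀ y, ‖T f y‖ * ‖T g y‖ = 0)
    (hsep' : ∀ f g : X →ᵇ E, (∀ y, ‖T f y‖ * ‖T g y‖ = 0) → ∀ x, ‖f x‖ * ‖g x‖ = 0) :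
    Nonempty (X ≃ₜ Y) := by
  classical
  by_cases hX : Nonempty X
  · by_cases hY : Nonempty Y
    · haveI := hX
      haveI := hY
      set e : (X →ᵇ E) ≃ (Y →ᵇ F) := Equiv.ofBijective T hbij with hedef
      have hsep1 : ∀ f g : X →ᵇ E, (∀ x, f x = 0 ∨ g x = 0) →
          ∀ y, e f y = 0 ∨ e g y = 0 := by
        intro f g h y
        have hval := hsep f g (fun x => by rcases h x with h' | h' <;> simp [h']) y
        rcases mul_eq_zero.1 hval with h' | h'
        · exact Or.inl (norm_eq_zero.1 h')
        · exact Or.inr (norm_eq_zero.1 h')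
      have hsep2 : ∀ g g' : Y →ᵇ F, (∀ y, g y = 0 ∨ g' y = 0) →
          ∀ x, e.symm g x = 0 ∨ e.symm g' x = 0 := by
        intro g g' h x
        have hval : ∀ y, ‖T (e.symm g) y‖ * ‖T (e.symm g') y‖ = 0 := by
          intro y
          have h1 : T (e.symm g) = g := e.apply_symm_apply g
          have h2 : T (e.symm g') = g' := e.apply_symm_apply g'
          rw [h1, h2]
          rcases h y with h' | h' <;> simp [h']
        have hval' := hsep' (e.symm g) (e.symm g') hval x
        rcases mul_eq_zero.1 hval' with h' | h'
        · exact Or.inl (norm_eq_zero.1 h')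
        · exact Or.inr (norm_eq_zero.1 h')
      exact main_homeo ⟨e, fun f g => hadd f g, hsep1, hsep2⟩
    · exfalso
      rw [not_nonempty_iff] at hY
      obtain ⟨e₀, he₀⟩ := exists_ne (0 : E)
      have h1 : T (BoundedContinuousFunction.const X e₀) = T 0 := by
        ext y
        exact isEmptyElim y
      have h2 := hbij.1 h1
      have x : X := Classical.arbitrary X
      have h3 := congrArg (fun f : X →ᵇ E => f x) h2
      simp only [BoundedContinuousFunction.const_apply,
        BoundedContinuousFunction.coe_zero, Pi.zero_apply] at h3
      exact he₀ h3
  · by_cases hY : Nonempty Y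
    · exfalso
      rw [not_nonempty_iff] at hX
      obtain ⟨e₀, he₀⟩ := exists_ne (0 : F)
      obtain ⟨g, hg⟩ := hbij.2 (BoundedContinuousFunction.const Y e₀)
      obtain ⟨g0, hg0⟩ := hbij.2 0
      have hgg : g = g0 := by
        ext x
        exact isEmptyElim x
      rw [hgg, hg0] at hg
      have y : Y := Classical.arbitrary Y
      have h3 := congrArg (fun f : Y →ᵇ F => f y) hg
      simp only [BoundedContinuousFunction.const_apply,
        BoundedContinuousFunction.coe_zero, Pi.zero_apply] at h3
      exact he₀ h3.symm
    · rw [not_nonempty_iff] at hX hY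
      refine ⟨⟨⟨fun x => isEmptyElim x, fun y => isEmptyElim y,
        fun x => isEmptyElim x, fun y => isEmptyElim y⟩, ?_, ?_⟩⟩
      · refine continuous_def.2 fun s _ => ?_
        have h : ((fun x : X => (isEmptyElim x : Y)) ⁻¹' s) = ∅ := Set.eq_empty_of_isEmpty _
        rw [h]
        exact isOpen_empty
      · refine continuous_def.2 fun s _ => ?_
        have h : ((fun y : Y => (isEmptyElim y : X)) ⁻¹' s) = ∅ := Set.eq_empty_of_isEmpty _
        rw [h]
        exact isOpen_empty
end
end
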